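/- In the algebra B generated by θ, φ, ∂θ, ∂φ with the relations (19), (22), (23) of the two-parameter calculus, the hermitian operators θ̂ = θ + (h/2)φ, φ̂ = φ, π̂_θ = ∂θ, π̂_φ = ∂φ + (h'/2)∂θ satisfy π̂_φ θ̂ = −θ̂ π̂_φ − h θ̂ π̂_θ − h' φ̂ π̂_φ + (1/2)(h² + h'²) φ̂ π̂_θ + (1/2)(h + h')·1. -/
import Mathlib

theorem pi_phi_theta_hat_relation (B : Type*) [Ring B] [Algebra ℂ B] (h h' : ℂ)
    (θ φ Dθ Dφ : B)
    (q1 : θ * θ = h • (θ * φ)) (q2 : φ * φ = 0) (q3 : θ * φ + φ * θ = 0)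
    (d1 : Dθ * Dθ = 0) (d2 : Dφ * Dφ = h' • (Dθ * Dφ))
    (d3 : Dθ * Dφ + Dφ * Dθ = 0)
    (c1 : Dθ * θ = 1 - θ * Dθ + h • (φ * Dθ))
    (c2 : Dθ * φ = -(φ * Dθ))
    (c3 : Dφ * θ = -(θ * Dφ) - h • (θ * Dθ) - h' • (φ * Dφ) - (h * h') • (φ * Dθ))
    (c4 : Dφ * φ = 1 - φ * Dφ + h' • (φ * Dθ)) :
    let θh : B := θ + (h / 2) • φ
    let φh : B := φ
    let πθ : B := Dθ
    let πφ : B := Dφ + (h' / 2) • Dθ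
    πφ * θh = -(θh * πφ) - h • (θh * πθ) - h' • (φh * πφ)
      + ((1 / 2) * (h ^ 2 + h' ^ 2)) • (φh * πθ) + ((1 / 2) * (h + h')) • (1 : B) := by
  intro θh φh πθ πφ
  simp only [θh, φh, πθ, πφ, mul_add, add_mul, smul_mul_assoc, mul_smul_comm, smul_smul,
    c1, c2, c3, c4, smul_add, smul_sub, smul_smul, neg_add, smul_neg, neg_neg]
  module
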